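/- Let α, β ∈ ℝ⁺ \ {1}, φ₁, φ₂, ψ entire, and Θₙ(x) = α^{φ₁(x)} (dⁿ/dxⁿ)(ψ(x)β^{−φ₂(x)}). Then for all n ≥ 0: ∑_{p=0}^{n} (n choose p) [Θ_{n−p}′(x) ψ^{(p)}(x) − (log α) φ₁′(x) Θ_{n−p}(x) ψ^{(p)}(x) − Θ_{n−p}(x) ψ^{(p+1)}(x)] = −(log β) ∑_{k=0}^{n} ∑_{p=0}^{n−k} (n choose k)((n−k) choose p) Θ_{n−p−k}(x) ψ^{(p)}(x) φ₂^{(k+1)}(x). -/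

import Mathlib

open Complex Finset

private lemma diff_iter {f : ℂ → ℂ} (hf : Differentiable ℂ f) (m : ℕ) :
    Differentiable ℂ (iteratedDeriv m f) :=
  (hf.contDiff (n := (m + 1 : ℕ))).differentiable_iteratedDeriv m
    (by exact_mod_cast Nat.lt_succ_self m)

private lemma diff_deriv {f : ℂ → ℂ} (hf : Differentiable ℂ f) :
    Differentiable ℂ (deriv f) := by
  have := diff_iter hf 1
  rwa [iteratedDeriv_one] at this

private lemma iter_cmul (c : ℂ) (f : ℂ → ℂ) (hf : Differentiable ℂ f) (n : ℕ) :
    iteratedDeriv n (fun z => c * f z) = fun x => c * iteratedDeriv n f x := by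
  induction n with
  | zero => simp [iteratedDeriv_zero]
  | succ n ih =>
    funext x
    rw [iteratedDeriv_succ, ih, iteratedDeriv_succ]
    exact deriv_const_mul c ((diff_iter hf n) x)

private lemma iter_sub (f g : ℂ → ℂ) (hf : Differentiable ℂ f) (hg : Differentiable ℂ g)
    (n : ℕ) :
    iteratedDeriv n (fun z => f z - g z) = fun x => iteratedDeriv n f x - iteratedDeriv n g x := by
  induction n with
  | zero => simp [iteratedDeriv_zero]
  | succ n ih =>
    funext x
    rw [iteratedDeriv_succ, ih, iteratedDeriv_succ, iteratedDeriv_succ]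
    exact deriv_sub ((diff_iter hf n) x) ((diff_iter hg n) x)

private lemma leibniz (f g : ℂ → ℂ) (hf : Differentiable ℂ f) (hg : Differentiable ℂ g)
    (n : ℕ) :
    iteratedDeriv n (fun z => f z * g z) = fun x =>
      ∑ p ∈ Finset.range (n + 1), (n.choose p : ℂ) *
        (iteratedDeriv (n - p) f x * iteratedDeriv p g x) := by
  induction n with
  | zero => funext x; simp [iteratedDeriv_zero]
  | succ n ih =>
    funext x
    rw [iteratedDeriv_succ, ih]
    have hdA : ∀ p x, DifferentiableAt ℂ
        (fun y => (n.choose p : ℂ) * (iteratedDeriv (n - p) f y * iteratedDeriv p g y)) x :=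
      fun p x => (((diff_iter hf (n - p)) x).mul ((diff_iter hg p) x)).const_mul _
    rw [deriv_fun_sum (fun p _ => hdA p x)]
    have hterm : ∀ p, deriv
        (fun y => (n.choose p : ℂ) * (iteratedDeriv (n - p) f y * iteratedDeriv p g y)) x =
        (n.choose p : ℂ) * (iteratedDeriv (n - p + 1) f x * iteratedDeriv p g x
          + iteratedDeriv (n - p) f x * iteratedDeriv (p + 1) g x) := by
      intro p
      rw [deriv_const_mul (d := fun y => iteratedDeriv (n - p) f y * iteratedDeriv p g y) _ (((diff_iter hf (n - p)) x).mul ((diff_iter hg p) x)),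
        deriv_fun_mul ((diff_iter hf (n - p)) x) ((diff_iter hg p) x),
        ← iteratedDeriv_succ, ← iteratedDeriv_succ]
    simp only [hterm, mul_add]
    rw [Finset.sum_add_distrib]
    -- A := first sum, B := second sum
    have hA : ∑ p ∈ Finset.range (n + 1),
        (n.choose p : ℂ) * (iteratedDeriv (n - p + 1) f x * iteratedDeriv p g x)
        = (∑ p ∈ Finset.range (n + 1),
            (n.choose (p + 1) : ℂ) * (iteratedDeriv (n - p) f x * iteratedDeriv (p + 1) g x))
          + iteratedDeriv (n + 1) f x * iteratedDeriv 0 g x := by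
      rw [Finset.sum_range_succ' (fun p =>
        (n.choose p : ℂ) * (iteratedDeriv (n - p + 1) f x * iteratedDeriv p g x))]
      rw [Finset.sum_range_succ (fun p =>
        (n.choose (p + 1) : ℂ) * (iteratedDeriv (n - p) f x * iteratedDeriv (p + 1) g x))]
      simp only [Nat.choose_self, Nat.choose_succ_self, Nat.cast_zero, zero_mul, add_zero,
        Nat.choose_zero_right, Nat.cast_one, one_mul, Nat.sub_zero]
      congr 1
      · apply Finset.sum_congr rfl
        intro p hp
        have hpn : p < n := Finset.mem_range.mp hp
        have : n - (p + 1) + 1 = n - p := by omega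
        rw [this]
    rw [hA]
    -- now RHS
    rw [Finset.sum_range_succ' (fun p =>
      ((n + 1).choose p : ℂ) * (iteratedDeriv (n + 1 - p) f x * iteratedDeriv p g x))]
    simp only [Nat.choose_zero_right, Nat.cast_one, one_mul, Nat.sub_zero,
      Nat.succ_sub_succ_eq_sub]
    have : ∀ p, ((n + 1).choose (p + 1) : ℂ) = (n.choose p : ℂ) + (n.choose (p + 1) : ℂ) := by
      intro p; rw [Nat.choose_succ_succ]; push_cast; ring
    simp only [this]
    rw [add_right_comm]
    congr 1
    rw [← Finset.sum_add_distrib]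
    apply Finset.sum_congr rfl
    intro p hp
    ring

theorem recurrence_x_deriv
    (α β : ℝ) (hα : 0 < α) (hα1 : α ≠ 1) (hβ : 0 < β) (hβ1 : β ≠ 1)
    (φ₁ φ₂ ψ : ℂ → ℂ) (hφ₁ : Differentiable ℂ φ₁) (hφ₂ : Differentiable ℂ φ₂)
    (hψ : Differentiable ℂ ψ)
    (Θ : ℕ → ℂ → ℂ)
    (hΘ : ∀ n x, Θ n x = Complex.exp (φ₁ x * (Real.log α : ℂ)) *
      iteratedDeriv n (fun z => ψ z * Complex.exp (-(φ₂ z) * (Real.log β : ℂ))) x)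
    (n : ℕ) (x : ℂ) :
    ∑ p ∈ Finset.range (n + 1), (n.choose p : ℂ) *
        (deriv (Θ (n - p)) x * iteratedDeriv p ψ x
          - (Real.log α : ℂ) * deriv φ₁ x * Θ (n - p) x * iteratedDeriv p ψ x
          - Θ (n - p) x * iteratedDeriv (p + 1) ψ x)
    = -(Real.log β : ℂ) *
      ∑ k ∈ Finset.range (n + 1), ∑ p ∈ Finset.range (n - k + 1),
        (n.choose k : ℂ) * ((n - k).choose p : ℂ) *
          Θ (n - p - k) x * iteratedDeriv p ψ x * iteratedDeriv (k + 1) φ₂ x := by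
  set L1 : ℂ := (Real.log α : ℂ) with hL1
  set L2 : ℂ := (Real.log β : ℂ) with hL2
  set E : ℂ → ℂ := fun z => Complex.exp (-(φ₂ z) * L2) with hE_def
  set g : ℂ → ℂ := fun z => ψ z * E z with hg_def
  set A : ℂ → ℂ := fun y => Complex.exp (φ₁ y * L1) with hA_def
  have hE : Differentiable ℂ E := (hφ₂.neg.mul_const L2).cexp
  have hg : Differentiable ℂ g := hψ.mul hE
  have hdg : Differentiable ℂ (deriv g) := diff_deriv hg
  have hdψ : Differentiable ℂ (deriv ψ) := diff_deriv hψ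
  have hdφ₂ : Differentiable ℂ (deriv φ₂) := diff_deriv hφ₂
  have hgψ : Differentiable ℂ (fun z => g z * ψ z) := hg.mul hψ
  have hΘfun : ∀ m, Θ m = fun y => A y * iteratedDeriv m g y := fun m => funext fun y => hΘ m y
  have hA' : ∀ y, HasDerivAt A (L1 * deriv φ₁ y * A y) y := by
    intro y
    have h := ((hφ₁ y).hasDerivAt.mul_const L1).cexp
    convert h using 1
    show L1 * deriv φ₁ y * cexp (φ₁ y * L1) = _
    ring
    rfl
  have hΘd : ∀ m y, deriv (Θ m) y =
      L1 * deriv φ₁ y * Θ m y + A y * iteratedDeriv (m + 1) g y := by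
    intro m y
    rw [hΘfun m, deriv_fun_mul (hA' y).differentiableAt ((diff_iter hg m) y),
      (hA' y).deriv, ← iteratedDeriv_succ]
    ring
  -- derivative of g
  have hgd : deriv g = fun z => deriv ψ z * E z + ψ z * (E z * (-(deriv φ₂ z) * L2)) := by
    funext z
    have h1 : HasDerivAt E (E z * (-(deriv φ₂ z) * L2)) z := by
      have := (((hφ₂ z).hasDerivAt.neg.mul_const L2).cexp)
      convert this using 1
      all_goals rfl
    exact ((hψ z).hasDerivAt.mul h1).deriv
  have hcomb : (fun z => deriv g z * ψ z - g z * deriv ψ z)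
      = fun z => -L2 * ((g z * ψ z) * deriv φ₂ z) := by
    funext z
    rw [hgd]
    simp only [hg_def]
    ring
  -- LHS = A x * (S1 - S2)
  have hLHS : ∑ p ∈ Finset.range (n + 1), (n.choose p : ℂ) *
        (deriv (Θ (n - p)) x * iteratedDeriv p ψ x
          - L1 * deriv φ₁ x * Θ (n - p) x * iteratedDeriv p ψ x
          - Θ (n - p) x * iteratedDeriv (p + 1) ψ x)
      = A x * ((∑ p ∈ Finset.range (n + 1), (n.choose p : ℂ) *
          (iteratedDeriv (n - p + 1) g x * iteratedDeriv p ψ x))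
        - ∑ p ∈ Finset.range (n + 1), (n.choose p : ℂ) *
          (iteratedDeriv (n - p) g x * iteratedDeriv (p + 1) ψ x)) := by
    rw [mul_sub, Finset.mul_sum, Finset.mul_sum, ← Finset.sum_sub_distrib]
    apply Finset.sum_congr rfl
    intro p hp
    rw [hΘd, hΘ]
    ring
  rw [hLHS]
  -- S1 as iterated derivative
  have hS1 : ∑ p ∈ Finset.range (n + 1), (n.choose p : ℂ) *
      (iteratedDeriv (n - p + 1) g x * iteratedDeriv p ψ x)
      = iteratedDeriv n (fun z => deriv g z * ψ z) x := by
    rw [leibniz (deriv g) ψ hdg hψ n]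
    apply Finset.sum_congr rfl
    intro p hp
    rw [← iteratedDeriv_succ']
  have hS2 : ∑ p ∈ Finset.range (n + 1), (n.choose p : ℂ) *
      (iteratedDeriv (n - p) g x * iteratedDeriv (p + 1) ψ x)
      = iteratedDeriv n (fun z => g z * deriv ψ z) x := by
    rw [leibniz g (deriv ψ) hg hdψ n]
    apply Finset.sum_congr rfl
    intro p hp
    rw [← iteratedDeriv_succ']
  rw [hS1, hS2]
  have hsub : iteratedDeriv n (fun z => deriv g z * ψ z) x
      - iteratedDeriv n (fun z => g z * deriv ψ z) x
      = iteratedDeriv n (fun z => deriv g z * ψ z - g z * deriv ψ z) x := by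
    rw [iter_sub (fun z => deriv g z * ψ z) (fun z => g z * deriv ψ z) (hdg.mul hψ) (hg.mul hdψ) n]
  rw [hsub, hcomb, iter_cmul (-L2) (fun z => g z * ψ z * deriv φ₂ z) (hgψ.mul hdφ₂) n,
    leibniz (fun z => g z * ψ z) (deriv φ₂) hgψ hdφ₂ n]
  -- expand inner products
  beta_reduce
  simp only [Finset.mul_sum]
  apply Finset.sum_congr rfl
  intro k hk
  rw [leibniz g ψ hg hψ (n - k)]
  beta_reduce
  simp only [Finset.mul_sum, Finset.sum_mul]
  apply Finset.sum_congr rfl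
  intro p hp
  rw [hΘ, ← iteratedDeriv_succ']
  have : n - p - k = n - k - p := by omega
  rw [this]
  ring
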